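/- Let J : ℝ^d → ℝ and let x* be a global minimizer of J. Let ε̂ ≥ 0, L > 0, and set μ := max{L, 1}. Let step sizes α_0, α_1, … > 0 be given, and let iterates be generated by x^{j+1} := x^j − α_j g_j / max{‖g_j‖, 1}, where each g_j ∈ ℝ^d is an ε̂-subgradient of J at x^j (i.e., J(z) ≥ J(x^j) + ⟨g_j, z − x^j⟩ − ε̂ for all z) with ‖g_j‖ ≤ L. Then for every r ≥ 0, min_{0 ≤ k ≤ r} J(x^k) − J(x*) ≤ (μ ‖x^0 − x*‖² + μ Σ_{j=0}^{r} α_j²) / (2 Σ_{j=0}^{r} α_j) + μ ε̂. -/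

import Mathlib

open scoped RealInnerProductSpace

/-- suboptimality bound for the `ε̂`-subgradient method with scaled
directions, uniformly bounded subgradients and a global minimizer `x*`. -/
theorem subgradient_method_suboptimality_bound (d : ℕ) (J : EuclideanSpace ℝ (Fin d) → ℝ)
    (xs : EuclideanSpace ℝ (Fin d)) (hxs : ∀ z, J xs ≤ J z)
    (εhat L : ℝ) (hεhat : 0 ≤ εhat) (hL : 0 < L)
    (α : ℕ → ℝ) (hα : ∀ j, 0 < α j)
    (x g : ℕ → EuclideanSpace ℝ (Fin d))
    (hstep : ∀ j, x (j + 1) = x j - (α j / max ‖g j‖ 1) • g j)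
    (hsub : ∀ j, ∀ z : EuclideanSpace ℝ (Fin d), J z ≥ J (x j) + ⟪g j, z - x j⟫ - εhat)
    (hbound : ∀ j, ‖g j‖ ≤ L) :
    ∀ r : ℕ,
      (Finset.range (r + 1)).inf' Finset.nonempty_range_add_one (fun k => J (x k)) - J xs ≤
        (max L 1 * ‖x 0 - xs‖ ^ 2 + max L 1 * ∑ j ∈ Finset.range (r + 1), (α j) ^ 2)
            / (2 * ∑ j ∈ Finset.range (r + 1), α j)
          + max L 1 * εhat := by
  intro r
  set μ := max L 1 with hμdef
  have hμ1 : (1:ℝ) ≤ μ := le_max_right _ _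
  have hμpos : (0:ℝ) < μ := lt_of_lt_of_le one_pos hμ1
  set S := ∑ j ∈ Finset.range (r+1), α j with hSdef
  set Q := ∑ j ∈ Finset.range (r+1), (α j)^2 with hQdef
  have hSpos : 0 < S := Finset.sum_pos (fun j _ => hα j) Finset.nonempty_range_add_one
  have hQ0 : 0 ≤ Q := Finset.sum_nonneg (fun j _ => sq_nonneg _)
  set Δ := (Finset.range (r+1)).inf' Finset.nonempty_range_add_one (fun k => J (x k)) - J xs
    with hΔdef
  have hΔle : ∀ j, j ≤ r → Δ ≤ J (x j) - J xs := by
    intro j hj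
    have h := Finset.inf'_le (fun k => J (x k))
      (Finset.mem_range.mpr (Nat.lt_succ_of_le hj))
    exact sub_le_sub_right h (J xs)
  by_cases hcase : Δ ≤ εhat
  · have hnum : (0:ℝ) ≤ μ * ‖x 0 - xs‖ ^ 2 + μ * Q := by positivity
    have hfrac : (0:ℝ) ≤ (μ * ‖x 0 - xs‖ ^ 2 + μ * Q) / (2 * S) :=
      div_nonneg hnum (by positivity)
    have hεμ : εhat ≤ μ * εhat := le_mul_of_one_le_left hεhat hμ1
    linarith
  · push_neg at hcase
    have h0 : (0:ℝ) ≤ Δ - εhat := by linarith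
    have step : ∀ j, j ≤ r →
        ‖x (j+1) - xs‖^2 ≤ ‖x j - xs‖^2 - 2*(Δ - εhat)/μ * α j + (α j)^2 := by
      intro j hj
      set m := max ‖g j‖ 1 with hm
      have hm1 : (1:ℝ) ≤ m := le_max_right _ _
      have hmpos : (0:ℝ) < m := lt_of_lt_of_le one_pos hm1
      have hgm : ‖g j‖ ≤ m := le_max_left _ _
      have hmμ : m ≤ μ := max_le_max (hbound j) le_rfl
      set c := α j / m with hc
      have hcpos : 0 < c := div_pos (hα j) hmpos
      have hcm : c * m = α j := div_mul_cancel₀ _ (ne_of_gt hmpos)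
      have hI : Δ - εhat ≤ ⟪g j, x j - xs⟫ := by
        have h1 := hΔle j hj
        have h2 := hsub j xs
        have h3 : ⟪g j, xs - x j⟫ = - ⟪g j, x j - xs⟫ := by
          rw [← inner_neg_right]; congr 1; abel
        rw [h3] at h2
        linarith
      have hexp : ‖x (j+1) - xs‖^2
          = ‖x j - xs‖^2 - 2 * c * ⟪g j, x j - xs⟫ + c^2 * ‖g j‖^2 := by
        rw [hstep j]
        have h4 : x j - c • g j - xs = (x j - xs) - c • g j := by abel
        rw [h4, norm_sub_sq_real, real_inner_smul_right, real_inner_comm, norm_smul]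
        rw [Real.norm_eq_abs, abs_of_pos hcpos]
        ring
      have hG2 : c^2 * ‖g j‖^2 ≤ (α j)^2 := by
        have hGm2 : ‖g j‖^2 ≤ m^2 := by nlinarith [norm_nonneg (g j)]
        calc c^2 * ‖g j‖^2 ≤ c^2 * m^2 := by nlinarith [sq_nonneg c]
          _ = (c * m)^2 := by ring
          _ = (α j)^2 := by rw [hcm]
      have hdiv : α j / μ ≤ α j / m := by
        apply div_le_div_of_nonneg_left (hα j).le hmpos hmμ
      have h5 : 2*(Δ - εhat)/μ * α j ≤ 2 * c * ⟪g j, x j - xs⟫ := by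
        have ha : 2*(Δ - εhat)/μ * α j = 2*(Δ-εhat) * (α j / μ) := by ring
        have hb : 2*(Δ-εhat) * (α j / μ) ≤ 2*(Δ-εhat) * c := by
          apply mul_le_mul_of_nonneg_left hdiv (by linarith)
        have hcI : 2 * c * (Δ - εhat) ≤ 2 * c * ⟪g j, x j - xs⟫ :=
          mul_le_mul_of_nonneg_left hI (by positivity)
        nlinarith
      rw [hexp]
      linarith
    have main : ∀ n, n ≤ r + 1 →
        ‖x n - xs‖^2 ≤ ‖x 0 - xs‖^2 - 2*(Δ - εhat)/μ * (∑ j ∈ Finset.range n, α j)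
          + ∑ j ∈ Finset.range n, (α j)^2 := by
      intro n
      induction n with
      | zero => intro _; simp
      | succ n ih =>
        intro hn
        have h1 := ih (by omega)
        have h2 := step n (by omega)
        rw [Finset.sum_range_succ, Finset.sum_range_succ, mul_add]
        linarith
    have hfin := main (r+1) le_rfl
    have hD : 0 ≤ ‖x (r+1) - xs‖^2 := sq_nonneg _
    have h3 : 2*(Δ - εhat)/μ * S ≤ ‖x 0 - xs‖^2 + Q := by
      rw [hSdef, hQdef]; linarith [hfin]
    have key : Δ - εhat ≤ (μ * ‖x 0 - xs‖^2 + μ * Q) / (2*S) := by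
      rw [le_div_iff₀ (by positivity)]
      have h4 : 2*(Δ-εhat)/μ * S * μ = (Δ - εhat) * (2*S) := by field_simp
      have h5 := mul_le_mul_of_nonneg_right h3 hμpos.le
      rw [h4] at h5
      have h6 : (‖x 0 - xs‖^2 + Q) * μ = μ * ‖x 0 - xs‖^2 + μ * Q := by ring
      linarith
    have hεμ : εhat ≤ μ * εhat := le_mul_of_one_le_left hεhat hμ1
    linarith
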